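/- Let N ≥ 2, let A be the (N−1)×N real matrix with A_{i,i} = 1, A_{i,i+1} = 1 and all other entries 0, let D be the (N−1)×N real matrix with D_{i,i} = 1, D_{i,i+1} = −1 and all other entries 0, let M̂ = diag(1/m_1, …, 1/m_N) with each m_i > 0, and set K = Aᵀ·(D·M̂·Dᵀ)⁻¹·D. Then K has no row consisting entirely of zeros and no column consisting entirely of zeros. -/

import Mathlib

open Matrix

/-- If `P` has the bidiagonal pattern `P i i = 1`, `P i (i+1) = c`, then `x ᵥ* P = 0`
implies `x = 0`. -/
lemma aux_bidiag_vecMul_zero (n : ℕ) (c : ℝ) (P : Matrix (Fin n) (Fin (n + 1)) ℝ)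
    (hP : ∀ i j, P i j = if (j : ℕ) = (i : ℕ) then 1
      else if (j : ℕ) = (i : ℕ) + 1 then c else 0)
    (x : Fin n → ℝ) (hx : ∀ j : Fin (n + 1), ∑ i, x i * P i j = 0) :
    x = 0 := by
  suffices h : ∀ k (hk : k < n), x ⟨k, hk⟩ = 0 by
    funext i
    exact h i.1 i.2
  intro k
  induction k with
  | zero =>
    intro hk
    have h0 := hx ⟨0, by omega⟩
    rw [Finset.sum_eq_single (⟨0, hk⟩ : Fin n)] at h0
    · simpa [hP] using h0
    · intro b _ hb
      have hbv : (b : ℕ) ≠ 0 := fun h => hb (Fin.ext h)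
      simp [hP, Ne.symm hbv]
    · intro h
      exact absurd (Finset.mem_univ _) h
  | succ k ih =>
    intro hk
    have hk' : k < n := by omega
    have hxk : x ⟨k, hk'⟩ = 0 := ih hk'
    have h1 := hx ⟨k + 1, by omega⟩
    have hsum : ∀ i : Fin n,
        x i * P i ⟨k + 1, by omega⟩ = if i = ⟨k + 1, hk⟩ then x ⟨k + 1, hk⟩ else 0 := by
      intro i
      by_cases hi : i = ⟨k + 1, hk⟩
      · subst hi
        simp [hP]
      · rw [if_neg hi]
        by_cases hi' : (i : ℕ) = k
        · have : i = ⟨k, hk'⟩ := Fin.ext hi'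
          subst this
          simp [hP, hxk]
        · have h2 : (k + 1 : ℕ) ≠ (i : ℕ) := by
            intro h
            exact hi (Fin.ext h.symm)
          have h3 : (k + 1 : ℕ) ≠ (i : ℕ) + 1 := by omega
          simp [hP, h2, h3, hi', Ne.symm hi']
    rw [Finset.sum_congr rfl (fun i _ => hsum i), Finset.sum_ite_eq'] at h1
    simpa using h1

/-- The coupling matrix `K = Aᵀ (D Mhat Dᵀ)⁻¹ D` has no zero row and no zero column. -/
theorem K_no_zero_row_col (N : ℕ) (hN : 2 ≤ N)
    (A D : Matrix (Fin (N - 1)) (Fin N) ℝ)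
    (hA : ∀ i j, A i j = if (j : ℕ) = (i : ℕ) then 1
      else if (j : ℕ) = (i : ℕ) + 1 then 1 else 0)
    (hD : ∀ i j, D i j = if (j : ℕ) = (i : ℕ) then 1
      else if (j : ℕ) = (i : ℕ) + 1 then -1 else 0)
    (m : Fin N → ℝ) (hm : ∀ i, 0 < m i)
    (Mhat : Matrix (Fin N) (Fin N) ℝ)
    (hM : Mhat = Matrix.diagonal fun i => (m i)⁻¹)
    (K : Matrix (Fin N) (Fin N) ℝ)
    (hK : K = Aᵀ * (D * Mhat * Dᵀ)⁻¹ * D) :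
    (∀ i, ∃ j, K i j ≠ 0) ∧ (∀ j, ∃ i, K i j ≠ 0) := by
  obtain ⟨n, rfl⟩ : ∃ n, N = n + 2 := ⟨N - 2, by omega⟩
  set L : Matrix (Fin (n + 2 - 1)) (Fin (n + 2 - 1)) ℝ := D * Mhat * Dᵀ with hL
  -- D has independent rows (via vecMul)
  have hDinj : ∀ x : Fin (n + 2 - 1) → ℝ, (∀ j, ∑ i, x i * D i j = 0) → x = 0 := by
    intro x hx
    exact aux_bidiag_vecMul_zero (n + 1) (-1) D hD x hx
  have hAinj : ∀ x : Fin (n + 2 - 1) → ℝ, (∀ j, ∑ i, x i * A i j = 0) → x = 0 := by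
    intro x hx
    exact aux_bidiag_vecMul_zero (n + 1) 1 A hA x hx
  -- L is positive definite
  have hPD : L.PosDef := by
    rw [Matrix.posDef_iff_dotProduct_mulVec]
    constructor
    · show Lᴴ = L
      rw [hL, conjTranspose_mul, conjTranspose_mul]
      rw [hM]
      ext i j
      simp [Matrix.conjTranspose_apply, Matrix.mul_apply, Matrix.transpose_apply,
        Matrix.diagonal_apply, mul_comm]
      apply Finset.sum_congr rfl
      intro a _
      ring
    · intro x hx
      have hy : x ᵥ* D ≠ 0 := by
        intro h
        apply hx
        apply hDinj
        intro j
        have := congrFun h j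
        simpa [Matrix.vecMul, dotProduct] using this
      obtain ⟨j0, hj0⟩ : ∃ j0, (x ᵥ* D) j0 ≠ 0 := by
        by_contra h
        push_neg at h
        exact hy (funext h)
      have hform : dotProduct (star x) (L *ᵥ x)
          = ∑ j, (m j)⁻¹ * ((x ᵥ* D) j * (x ᵥ* D) j) := by
        rw [hL, ← Matrix.mulVec_mulVec, ← Matrix.mulVec_mulVec, Matrix.dotProduct_mulVec,
          star_trivial, Matrix.mulVec_transpose, hM]
        simp [Matrix.mulVec_diagonal, dotProduct, mul_comm, mul_left_comm]
      rw [hform]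
      apply Finset.sum_pos'
      · intro j _
        have : 0 ≤ (x ᵥ* D) j * (x ᵥ* D) j := mul_self_nonneg _
        exact mul_nonneg (le_of_lt (inv_pos.mpr (hm j))) this
      · refine ⟨j0, Finset.mem_univ _, ?_⟩
        have h1 : 0 < (x ᵥ* D) j0 * (x ᵥ* D) j0 := mul_self_pos.mpr hj0
        have h2 : 0 < (m j0)⁻¹ := inv_pos.mpr (hm j0)
        exact mul_pos h2 h1
  have hdet : IsUnit L.det := hPD.det_pos.ne'.isUnit
  have hinv1 : L⁻¹ * L = 1 := Matrix.nonsing_inv_mul L hdet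
  have hinv2 : L * L⁻¹ = 1 := Matrix.mul_nonsing_inv L hdet
  constructor
  · -- no zero row
    intro i
    by_contra h
    push_neg at h
    -- row i of Aᵀ * L⁻¹ vecMul'd with D is zero
    have hx : ∀ j, ∑ k, (Aᵀ * L⁻¹) i k * D k j = 0 := by
      intro j
      have := h j
      rw [hK, Matrix.mul_apply] at this
      exact this
    have h0 : (fun k => (Aᵀ * L⁻¹) i k) = 0 := hDinj _ hx
    -- hence (Aᵀ i) ᵥ* L⁻¹ = 0
    have h1 : (Aᵀ i) ᵥ* L⁻¹ = 0 := by
      funext k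
      have := congrFun h0 k
      rw [Matrix.mul_apply] at this
      simpa [Matrix.vecMul, dotProduct] using this
    have h2 : Aᵀ i = 0 := by
      have : ((Aᵀ i) ᵥ* L⁻¹) ᵥ* L = Aᵀ i := by
        rw [Matrix.vecMul_vecMul, hinv1, Matrix.vecMul_one]
      rw [h1, Matrix.zero_vecMul] at this
      exact this.symm
    -- but column i of A is nonzero
    by_cases hi : (i : ℕ) < n + 1
    · have := congrFun h2 ⟨(i : ℕ), hi⟩
      rw [Matrix.transpose_apply, hA] at this
      simp at this
    · have hiv : (i : ℕ) = n + 1 := by omega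
      have := congrFun h2 ⟨n, by omega⟩
      rw [Matrix.transpose_apply, hA] at this
      simp [hiv] at this
  · -- no zero column
    intro j
    by_contra h
    push_neg at h
    have hx : ∀ i', ∑ t, (fun t => (L⁻¹ * D) t j) t * A t i' = 0 := by
      intro i'
      have := h i'
      rw [hK, Matrix.mul_assoc, Matrix.mul_apply] at this
      calc ∑ t, (L⁻¹ * D) t j * A t i'
          = ∑ t, Aᵀ i' t * (L⁻¹ * D) t j := by
            apply Finset.sum_congr rfl
            intro t _
            rw [Matrix.transpose_apply, mul_comm]
        _ = 0 := this
    have h0 : (fun t => (L⁻¹ * D) t j) = 0 := hAinj _ hx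
    -- hence L⁻¹ *ᵥ (column j of D) = 0
    have h1 : L⁻¹ *ᵥ (fun s => D s j) = 0 := by
      funext t
      have := congrFun h0 t
      rw [Matrix.mul_apply] at this
      simpa [Matrix.mulVec, dotProduct] using this
    have h2 : (fun s => D s j) = (0 : Fin (n + 2 - 1) → ℝ) := by
      have : L *ᵥ (L⁻¹ *ᵥ (fun s => D s j)) = (fun s => D s j) := by
        rw [Matrix.mulVec_mulVec, hinv2, Matrix.one_mulVec]
      rw [h1, Matrix.mulVec_zero] at this
      exact this.symm
    by_cases hj : (j : ℕ) < n + 1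
    · have := congrFun h2 ⟨(j : ℕ), hj⟩
      rw [hD] at this
      simp at this
    · have hjv : (j : ℕ) = n + 1 := by omega
      have := congrFun h2 ⟨n, by omega⟩
      rw [hD] at this
      simp [hjv] at this
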